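/- A Boolean function f has characteristic rank at most k if and only if f = g + h for some reflexive Boolean function g (i.e., with characteristic rank 0) and some Boolean function h of degree at most k, all of the same arity. -/

import Mathlib

/-- A Boolean function of arity `n`. -/
abbrev Bf (n : ℕ) := (Fin n → ZMod 2) → ZMod 2

/-- The Zhegalkin coefficient of the monomial `x_S` of `f`, via Möbius inversion. -/
def zCoeff {n : ℕ} (f : Bf n) (S : Finset (Fin n)) : ZMod 2 :=
  ∑ T ∈ S.powerset, f fun i => if i ∈ T then 1 else 0

/-- The set of monomials of the Zhegalkin polynomial of `f`. -/
def monomials {n : ℕ} (f : Bf n) : Finset (Finset (Fin n)) :=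
  Finset.univ.filter fun S => zCoeff f S = 1
/-- The inner negation `f^n(a) = f(ā)`. -/
def innerNeg {n : ℕ} (f : Bf n) : Bf n := fun a => f fun i => a i + 1

/-- The number of monomials of `f` properly containing `S`; the characteristic
`Char(S, f)` is its parity. -/
def charCount {n : ℕ} (f : Bf n) (S : Finset (Fin n)) : ℕ :=
  ((monomials f).filter fun A => S ⊂ A).card

/-- The characteristic rank of `f` is at most `m`: `Char(S, f) = 0` for all
`S` with `|S| ≥ m`. -/
def CharRankLE {n : ℕ} (f : Bf n) (m : ℕ) : Prop :=
  ∀ S : Finset (Fin n), m ≤ S.card → Even (charCount f S)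

open Finset

lemma zmod2_cases (x : ZMod 2) : x = 0 ∨ x = 1 := by revert x; decide

lemma zCoeff_add {n : ℕ} (f g : Bf n) (S : Finset (Fin n)) :
    zCoeff (fun a => f a + g a) S = zCoeff f S + zCoeff g S := by
  simp [zCoeff, Finset.sum_add_distrib]

/-- `Char(S,f)` as an element of `ZMod 2`. -/
def Char2 {n : ℕ} (f : Bf n) (S : Finset (Fin n)) : ZMod 2 :=
  ∑ A ∈ Finset.univ.filter (fun A => S ⊂ A), zCoeff f A

lemma even_charCount_iff {n : ℕ} (f : Bf n) (S : Finset (Fin n)) :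
    Even (charCount f S) ↔ Char2 f S = 0 := by
  have h1 : ((charCount f S : ℕ) : ZMod 2) = Char2 f S := by
    rw [charCount, Char2, Finset.card_eq_sum_ones, Nat.cast_sum]
    rw [monomials, Finset.filter_filter]
    rw [Finset.sum_filter, Finset.sum_filter]
    refine Finset.sum_congr rfl fun A _ => ?_
    rcases zmod2_cases (zCoeff f A) with h | h <;> simp [h]
  rw [← h1, ZMod.natCast_eq_zero_iff, even_iff_two_dvd]

lemma zCoeff_innerNeg {n : ℕ} (f : Bf n) (S : Finset (Fin n)) :
    zCoeff (innerNeg f) S = ∑ T ∈ Finset.univ.filter (fun T => S ⊆ T), zCoeff f T := by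
  classical
  have hL : zCoeff (innerNeg f) S
      = ∑ T ∈ S.powerset, f (fun i => if i ∈ Tᶜ then 1 else 0) := by
    refine Finset.sum_congr rfl fun T _ => ?_
    show f (fun i => (if i ∈ T then (1 : ZMod 2) else 0) + 1) = _
    congr 1
    funext i
    by_cases h : i ∈ T <;> simp [h, Finset.mem_compl] <;> decide
  have hswap : ∑ T ∈ Finset.univ.filter (fun T => S ⊆ T), zCoeff f T
      = ∑ U ∈ (Finset.univ : Finset (Finset (Fin n))),
          ∑ T ∈ Finset.univ.filter (fun T => S ⊆ T ∧ U ⊆ T),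
            f (fun i => if i ∈ U then 1 else 0) := by
    simp only [zCoeff]
    exact Finset.sum_comm' (fun T U => by
      simp [Finset.mem_powerset, and_comm])
  have hinner : ∀ U : Finset (Fin n),
      (∑ T ∈ Finset.univ.filter (fun T => S ⊆ T ∧ U ⊆ T),
          f (fun i => if i ∈ U then 1 else 0))
      = if Sᶜ ⊆ U then f (fun i => if i ∈ U then 1 else 0) else 0 := by
    intro U
    by_cases hc : Sᶜ ⊆ U
    · rw [if_pos hc]
      have huniv : S ∪ U = Finset.univ := by
        apply Finset.eq_univ_iff_forall.mpr
        intro i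
        by_cases h : i ∈ S
        · exact Finset.mem_union_left _ h
        · exact Finset.mem_union_right _ (hc (Finset.mem_compl.mpr h))
      have : Finset.univ.filter (fun T => S ⊆ T ∧ U ⊆ T) = {Finset.univ} := by
        ext T
        simp only [Finset.mem_filter, Finset.mem_univ, true_and, Finset.mem_singleton,
          ← Finset.union_subset_iff, huniv, Finset.univ_subset_iff]
      rw [this, Finset.sum_singleton]
    · rw [if_neg hc]
      obtain ⟨j, hjS, hjU⟩ : ∃ j, j ∉ S ∧ j ∉ U := by
        rcases Finset.not_subset.mp hc with ⟨j, hj1, hj2⟩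
        exact ⟨j, Finset.mem_compl.mp hj1, hj2⟩
      refine Finset.sum_involution
        (fun T _ => if j ∈ T then T.erase j else insert j T) ?_ ?_ ?_ ?_
      · intro a ha
        exact CharTwo.add_self_eq_zero _
      · intro a _ _
        show (if j ∈ a then a.erase j else insert j a) ≠ a
        by_cases h : j ∈ a
        · rw [if_pos h]
          intro he
          exact Finset.notMem_erase j a (he.symm ▸ h)
        · rw [if_neg h]
          intro he
          exact h (he ▸ Finset.mem_insert_self j a)
      · intro a ha
        simp only [Finset.mem_filter, Finset.mem_univ, true_and] at ha ⊢
        by_cases h : j ∈ a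
        · rw [if_pos h]
          exact ⟨Finset.subset_erase.mpr ⟨ha.1, hjS⟩, Finset.subset_erase.mpr ⟨ha.2, hjU⟩⟩
        · rw [if_neg h]
          exact ⟨ha.1.trans (Finset.subset_insert _ _), ha.2.trans (Finset.subset_insert _ _)⟩
      · intro a ha
        by_cases h : j ∈ a
        · simp [h, Finset.notMem_erase, Finset.insert_erase]
        · simp [h, Finset.mem_insert_self, Finset.erase_insert]
  rw [hL, hswap]
  rw [Finset.sum_congr rfl fun U _ => hinner U]
  rw [← Finset.sum_filter]
  refine Finset.sum_nbij' (fun T => Tᶜ) (fun U => Uᶜ) ?_ ?_ ?_ ?_ ?_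
  · intro T hT
    simp only [Finset.mem_filter, Finset.mem_univ, true_and]
    exact Finset.compl_subset_compl.mpr (Finset.mem_powerset.mp hT)
  · intro U hU
    simp only [Finset.mem_filter, Finset.mem_univ, true_and] at hU
    rw [Finset.mem_powerset, ← Finset.compl_subset_compl, compl_compl]
    exact hU
  · intro T _; exact compl_compl T
  · intro U _; exact compl_compl U
  · intro T _; rfl

lemma char2_eq {n : ℕ} (f : Bf n) (S : Finset (Fin n)) :
    zCoeff (fun a => f a + innerNeg f a) S = Char2 f S := by
  classical
  rw [zCoeff_add, zCoeff_innerNeg]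
  have hsplit : Finset.univ.filter (fun T => S ⊆ T)
      = insert S (Finset.univ.filter (fun T => S ⊂ T)) := by
    ext T
    simp only [Finset.mem_filter, Finset.mem_univ, true_and, Finset.mem_insert]
    constructor
    · intro hST
      rcases eq_or_ne T S with h | h
      · exact Or.inl h
      · exact Or.inr (Finset.ssubset_iff_subset_ne.mpr ⟨hST, Ne.symm h⟩)
    · rintro (rfl | h)
      · exact Finset.Subset.refl _
      · exact h.subset
  have hns : S ∉ Finset.univ.filter (fun T => S ⊂ T) := by
    simp only [Finset.mem_filter, Finset.mem_univ, true_and]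
    exact fun hx => absurd rfl (Finset.ssubset_iff_subset_ne.mp hx).2
  rw [hsplit, Finset.sum_insert hns, Char2, ← add_assoc, CharTwo.add_self_eq_zero, zero_add]

lemma zmod2_helper (x y z : ZMod 2) : y + (z + 1) * (y + x) = x + z * (x + y) := by revert x y z; decide

lemma zCoeff_var_mul {n : ℕ} (q : Bf n) (i0 : Fin n) (S : Finset (Fin n)) :
    zCoeff (fun a => a i0 * q a) S =
      if i0 ∈ S then zCoeff q S + zCoeff q (S.erase i0) else 0 := by
  classical
  by_cases hi : i0 ∈ S
  · rw [if_pos hi]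
    have hA : zCoeff (fun a => a i0 * q a) S
        = ∑ T ∈ S.powerset.filter (fun T => i0 ∈ T), q (fun i => if i ∈ T then 1 else 0) := by
      rw [zCoeff, Finset.sum_filter]
      refine Finset.sum_congr rfl fun T _ => ?_
      show (if i0 ∈ T then (1 : ZMod 2) else 0) * _ = _
      by_cases h : i0 ∈ T <;> simp [h]
    have hsplit : zCoeff q S
        = (∑ T ∈ S.powerset.filter (fun T => i0 ∈ T), q (fun i => if i ∈ T then 1 else 0))
          + zCoeff q (S.erase i0) := by
      rw [zCoeff, ← Finset.sum_filter_add_sum_filter_not S.powerset (fun T => i0 ∈ T)]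
      congr 1
      rw [zCoeff]
      refine Finset.sum_congr ?_ (fun _ _ => rfl)
      ext T
      simp [Finset.mem_powerset, Finset.subset_erase]
    rw [hA, hsplit, add_assoc, CharTwo.add_self_eq_zero, add_zero]
  · rw [if_neg hi, zCoeff]
    refine Finset.sum_eq_zero fun T hT => ?_
    have hnT : i0 ∉ T := fun h => hi (Finset.mem_powerset.mp hT h)
    show (if i0 ∈ T then (1 : ZMod 2) else 0) * _ = 0
    rw [if_neg hnT, zero_mul]


/-- `χ(f) ≤ k` iff `f = g + h` with `g` reflexive and `deg h ≤ k`. -/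
theorem charRankLE_iff_exists_reflexive_add_deg {n : ℕ} (f : Bf n) (k : ℕ) :
    CharRankLE f k ↔
    ∃ g h : Bf n, (∀ a, g (fun i => a i + 1) = g a) ∧
      (∀ S ∈ monomials h, S.card ≤ k) ∧ (∀ a, f a = g a + h a) := by
  classical
  constructor
  · intro hCR
    have hq0 : ∀ S : Finset (Fin n), k ≤ S.card →
        zCoeff (fun a => f a + innerNeg f a) S = 0 := fun S hS => by
      rw [char2_eq]
      exact (even_charCount_iff f S).mp (hCR S hS)
    cases n with
    | zero =>
      refine ⟨f, fun _ => 0, ?_, ?_, ?_⟩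
      · intro a
        congr 1
        funext i
        exact i.elim0
      · intro S hS
        exfalso
        have h1 : zCoeff (fun _ : Fin 0 → ZMod 2 => (0 : ZMod 2)) S = 1 :=
          (Finset.mem_filter.mp hS).2
        simp [zCoeff] at h1
      · intro a; simp
    | succ m =>
      refine ⟨fun a => f a + a 0 * (f a + innerNeg f a),
              fun a => a 0 * (f a + innerNeg f a), ?_, ?_, ?_⟩
      · intro a
        show f (fun i => a i + 1) + (a 0 + 1) *
              (f (fun i => a i + 1) + innerNeg f (fun i => a i + 1))
            = f a + a 0 * (f a + innerNeg f a)
        have h1 : innerNeg f (fun i => a i + 1) = f a := by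
          show f (fun i => a i + 1 + 1) = f a
          congr 1
          funext i
          rw [add_assoc, show (1 : ZMod 2) + 1 = 0 by decide, add_zero]
        have h2 : innerNeg f a = f (fun i => a i + 1) := rfl
        rw [h1, h2]
        exact zmod2_helper (f a) (f (fun i => a i + 1)) (a 0)
      · intro S hS
        have h1 : zCoeff (fun a => a 0 * (f a + innerNeg f a)) S = 1 :=
          (Finset.mem_filter.mp hS).2
        by_contra hk
        push_neg at hk
        rw [zCoeff_var_mul] at h1
        by_cases hi : (0 : Fin (m + 1)) ∈ S
        · rw [if_pos hi, hq0 S (le_of_lt hk),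
            hq0 (S.erase 0) (by rw [Finset.card_erase_of_mem hi]; omega),
            add_zero] at h1
          exact absurd h1 (by decide)
        · rw [if_neg hi] at h1
          exact absurd h1 (by decide)
      · intro a
        show f a = f a + a 0 * (f a + innerNeg f a) + a 0 * (f a + innerNeg f a)
        rw [add_assoc, CharTwo.add_self_eq_zero, add_zero]
  · rintro ⟨g, h, hg, hh, hfgh⟩ S hS
    rw [even_charCount_iff]
    have hf : f = fun a => g a + h a := funext hfgh
    rw [Char2]
    have hterm : ∀ A, zCoeff f A = zCoeff g A + zCoeff h A := by
      intro A
      rw [hf, zCoeff_add]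
    rw [Finset.sum_congr rfl fun A _ => hterm A, Finset.sum_add_distrib]
    have hG : (∑ A ∈ Finset.univ.filter (fun A => S ⊂ A), zCoeff g A) = 0 := by
      have hzero : (fun a => g a + innerNeg g a) = fun _ => (0 : ZMod 2) := by
        funext a
        rw [show innerNeg g a = g a from hg a]
        exact CharTwo.add_self_eq_zero _
      have := char2_eq g S
      rw [hzero] at this
      have h0 : Char2 g S = 0 := by rw [← this]; simp [zCoeff]
      exact h0
    have hH : (∑ A ∈ Finset.univ.filter (fun A => S ⊂ A), zCoeff h A) = 0 := by
      refine Finset.sum_eq_zero fun A hA => ?_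
      have hSA : S ⊂ A := (Finset.mem_filter.mp hA).2
      have hcard : k < A.card := lt_of_le_of_lt hS (Finset.card_lt_card hSA)
      rcases zmod2_cases (zCoeff h A) with h0 | h1
      · exact h0
      · exfalso
        have : A ∈ monomials h := Finset.mem_filter.mpr ⟨Finset.mem_univ _, h1⟩
        have := hh A this
        omega
    rw [hG, hH, add_zero]
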